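/- Let M = C ⊗ T be a Kronecker product of symmetric positive semidefinite integer matrices, where C is l×l and T is t×t. Suppose Q ∈ ℤ^{k×(lt)} has no zero rows and Q^T Q = M. If q is a positive definite integral quadratic form of rank l with Gram matrix Z_1 and q_A the A_t Dynkin form with Gram matrix Z_2, then k ≤ Σ_{r,s} (Z_1 ⊗ Z_2)_{rs} M_{rs}, i.e., k is at most the trace pairing of the tensor Gram matrix with M. -/

import Mathlib

set_option maxHeartbeats 1000000


open Matrix Kronecker

/-- The bilinear form attached to a matrix. -/
private def Bform {l : ℕ} (Z : Matrix (Fin l) (Fin l) ℝ) (u w : Fin l → ℝ) : ℝ :=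
  ∑ i, ∑ j, Z i j * u i * w j

private lemma Bform_symm {l : ℕ} {Z : Matrix (Fin l) (Fin l) ℝ} (hsym : Z.IsSymm)
    (u w : Fin l → ℝ) : Bform Z u w = Bform Z w u := by
  unfold Bform
  rw [Finset.sum_comm]
  refine Finset.sum_congr rfl fun j _ => Finset.sum_congr rfl fun i _ => ?_
  rw [hsym.apply i j]; ring

private lemma Bform_sub_sub {l : ℕ} (Z : Matrix (Fin l) (Fin l) ℝ) (u w : Fin l → ℝ) :
    Bform Z (u - w) (u - w)
      = Bform Z u u - Bform Z u w - Bform Z w u + Bform Z w w := by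
  unfold Bform
  have h : ∀ i j : Fin l, Z i j * (u - w) i * (u - w) j
      = Z i j * u i * u j - Z i j * u i * w j - (Z i j * w i * u j - Z i j * w i * w j) := by
    intro i j; simp only [Pi.sub_apply]; ring
  simp only [h, Finset.sum_sub_distrib]
  ring

private lemma Bform_int {l : ℕ} (Z : Matrix (Fin l) (Fin l) ℝ) (hsym : Z.IsSymm)
    (hdiag : ∀ i, ∃ z : ℤ, Z i i = z) (hoff : ∀ i j, ∃ z : ℤ, 2 * Z i j = z)
    (v : Fin l → ℤ) :
    ∃ z : ℤ, Bform Z (fun i => (v i : ℝ)) (fun i => (v i : ℝ)) = z := by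
  choose D hD using hdiag
  choose O hO using hoff
  refine ⟨(∑ i, ∑ j, if i < j then O i j * v i * v j else 0) + ∑ i, D i * v i * v i, ?_⟩
  unfold Bform
  have split : ∀ i j : Fin l, Z i j * (v i : ℝ) * (v j : ℝ)
      = (if i < j then Z i j * v i * v j else 0) + (if j < i then Z i j * v i * v j else 0)
        + (if i = j then Z i j * v i * v j else 0) := by
    intro i j
    rcases lt_trichotomy i j with h | h | h
    · rw [if_pos h, if_neg (asymm h), if_neg h.ne]; ring
    · subst h; rw [if_neg (lt_irrefl i), if_pos rfl]; ring
    · rw [if_neg (asymm h), if_pos h, if_neg h.ne']; ring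
  rw [show (∑ i, ∑ j, Z i j * (v i : ℝ) * (v j : ℝ))
      = ∑ i, ∑ j, ((if i < j then Z i j * (v i : ℝ) * v j else 0)
        + (if j < i then Z i j * (v i : ℝ) * v j else 0)
        + (if i = j then Z i j * (v i : ℝ) * v j else 0)) from
    Finset.sum_congr rfl fun i _ => Finset.sum_congr rfl fun j _ => split i j]
  simp only [Finset.sum_add_distrib]
  have h3 : ∀ i : Fin l, (∑ j, if i = j then Z i j * (v i : ℝ) * v j else 0)
      = ((D i : ℝ)) * v i * v i := by
    intro i
    rw [Finset.sum_ite_eq Finset.univ i (fun j => Z i j * (v i : ℝ) * v j),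
      if_pos (Finset.mem_univ i), hD i]
  have h2 : (∑ i, ∑ j, if j < i then Z i j * (v i : ℝ) * v j else 0)
      = ∑ i, ∑ j, if i < j then Z i j * (v i : ℝ) * v j else 0 := by
    rw [Finset.sum_comm]
    refine Finset.sum_congr rfl fun j _ => Finset.sum_congr rfl fun i _ => ?_
    rcases em (j < i) with h | h
    · rw [if_pos h, if_pos h, hsym.apply i j]; ring
    · rw [if_neg h, if_neg h]
  have h1 : (∑ i, ∑ j, if i < j then Z i j * (v i : ℝ) * v j else 0)
        + (∑ i, ∑ j, if i < j then Z i j * (v i : ℝ) * v j else 0)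
      = ∑ i, ∑ j, if i < j then ((O i j : ℝ)) * v i * v j else 0 := by
    rw [← Finset.sum_add_distrib]
    refine Finset.sum_congr rfl fun i _ => ?_
    rw [← Finset.sum_add_distrib]
    refine Finset.sum_congr rfl fun j _ => ?_
    rcases em (i < j) with h | h
    · simp only [if_pos h]
      rw [← hO i j]; ring
    · simp only [if_neg h]; ring
  simp only [h3, apply_ite (fun z : ℤ => (z : ℝ))]
  push_cast
  rw [← h1, h2]

private lemma Bform_one_le {l : ℕ} (Z : Matrix (Fin l) (Fin l) ℝ) (hsym : Z.IsSymm)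
    (hpd : Z.PosDef) (hdiag : ∀ i, ∃ z : ℤ, Z i i = z)
    (hoff : ∀ i j, ∃ z : ℤ, 2 * Z i j = z) (v : Fin l → ℤ) (hv : v ≠ 0) :
    1 ≤ Bform Z (fun i => (v i : ℝ)) (fun i => (v i : ℝ)) := by
  obtain ⟨z, hz⟩ := Bform_int Z hsym hdiag hoff v
  have hvc : (fun i => (v i : ℝ)) ≠ 0 := by
    intro h
    apply hv
    funext i
    have := congrFun h i
    simpa using this
  have hpos : 0 < Bform Z (fun i => (v i : ℝ)) (fun i => (v i : ℝ)) := by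
    have h := hpd.dotProduct_mulVec_pos hvc
    have hdp : star (fun i => (v i : ℝ)) ⬝ᵥ Z *ᵥ (fun i => (v i : ℝ))
        = Bform Z (fun i => (v i : ℝ)) (fun i => (v i : ℝ)) := by
      unfold Bform
      simp only [star_trivial, dotProduct, Matrix.mulVec, Finset.mul_sum]
      refine Finset.sum_congr rfl fun i _ => Finset.sum_congr rfl fun j _ => ?_
      ring
    rwa [hdp] at h
  rw [hz] at hpos ⊢
  exact_mod_cast Int.cast_pos.mp hpos

private lemma Bform_nonneg {l : ℕ} (Z : Matrix (Fin l) (Fin l) ℝ) (hsym : Z.IsSymm)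
    (hpd : Z.PosDef) (hdiag : ∀ i, ∃ z : ℤ, Z i i = z)
    (hoff : ∀ i j, ∃ z : ℤ, 2 * Z i j = z) (v : Fin l → ℤ) :
    0 ≤ Bform Z (fun i => (v i : ℝ)) (fun i => (v i : ℝ)) := by
  rcases eq_or_ne v 0 with rfl | hv
  · simp [Bform]
  · exact le_trans zero_le_one (Bform_one_le Z hsym hpd hdiag hoff v hv)

/-- The integer column `m` of a vector indexed by `Fin l × Fin t`. -/
private def colz {l t : ℕ} (x : Fin l × Fin t → ℤ) (m : ℕ) : Fin l → ℤ :=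
  fun i => if h : m < t then x (i, ⟨m, h⟩) else 0

private def colr {l t : ℕ} (x : Fin l × Fin t → ℤ) (m : ℕ) : Fin l → ℝ :=
  fun i => (colz x m i : ℝ)

private lemma colz_const {l t : ℕ} (x : Fin l × Fin t → ℤ) (a b : ℕ) (hab : a ≤ b)
    (h : ∀ m, a ≤ m → m < b → colz x m - colz x (m + 1) = 0) : colz x a = colz x b := by
  induction b, hab using Nat.le_induction with
  | base => rfl
  | succ b hb ih =>
    have h1 : colz x a = colz x b := ih (fun m hm hm' => h m hm (by omega))
    have h2 : colz x b = colz x (b + 1) := by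
      have := h b hb (by omega)
      exact sub_eq_zero.mp this
    rw [h1, h2]

private lemma row_bound {l t : ℕ}
    (Z₁ : Matrix (Fin l) (Fin l) ℝ) (h1sym : Z₁.IsSymm) (h1pd : Z₁.PosDef)
    (h1diag : ∀ i, ∃ z : ℤ, Z₁ i i = z)
    (h1off : ∀ i j, ∃ z : ℤ, 2 * Z₁ i j = z)
    (Z₂ : Matrix (Fin t) (Fin t) ℝ)
    (hZ₂ : Z₂ = Matrix.of fun (i j : Fin t) => if i = j then 1 else
      if (i : ℕ) + 1 = (j : ℕ) ∨ (j : ℕ) + 1 = (i : ℕ) then -(1 / 2) else 0)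
    (x : Fin l × Fin t → ℤ) (hx : x ≠ 0) :
    1 ≤ ∑ r : Fin l × Fin t, ∑ s : Fin l × Fin t,
      (Z₁ ⊗ₖ Z₂) r s * ((x r : ℝ) * (x s : ℝ)) := by
  -- `t` is positive since `x ≠ 0`
  have ht : 0 < t := by
    rcases Nat.eq_zero_or_pos t with rfl | h
    · exact absurd (funext fun p => (p.2.elim0 : x p = 0)) hx
    · exact h
  obtain ⟨t', rfl⟩ : ∃ t', t = t' + 1 := ⟨t - 1, by omega⟩
  clear ht
  set G : ℕ → ℕ → ℝ := fun m n => Bform Z₁ (colr x m) (colr x n) with hG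
  set z2 : ℕ → ℕ → ℝ := fun m n => if m = n then 1 else
      if m + 1 = n ∨ n + 1 = m then -(1 / 2) else 0 with hz2
  -- Step A: rewrite the quadratic form as a sum over column indices
  have hA : (∑ r : Fin l × Fin (t' + 1), ∑ s : Fin l × Fin (t' + 1),
        (Z₁ ⊗ₖ Z₂) r s * ((x r : ℝ) * (x s : ℝ)))
      = ∑ m ∈ Finset.range (t' + 1), ∑ n ∈ Finset.range (t' + 1), z2 m n * G m n := by
    have hcol : ∀ s : Fin (t' + 1), (fun i => ((x (i, s) : ℤ) : ℝ)) = colr x s.val := by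
      intro s
      funext i
      simp [colr, colz, s.isLt]
    have hZval : ∀ s s' : Fin (t' + 1), Z₂ s s' = z2 s.val s'.val := by
      intro s s'
      rw [hZ₂]
      simp only [Matrix.of_apply, hz2, Fin.ext_iff]
    calc (∑ r : Fin l × Fin (t' + 1), ∑ s : Fin l × Fin (t' + 1),
            (Z₁ ⊗ₖ Z₂) r s * ((x r : ℝ) * (x s : ℝ)))
        = ∑ z : ((Fin l × Fin (t' + 1)) × (Fin l × Fin (t' + 1))),
            (Z₁ ⊗ₖ Z₂) z.1 z.2 * ((x z.1 : ℝ) * (x z.2 : ℝ)) :=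
          (Fintype.sum_prod_type (fun z : (Fin l × Fin (t' + 1)) × (Fin l × Fin (t' + 1)) =>
            (Z₁ ⊗ₖ Z₂) z.1 z.2 * ((x z.1 : ℝ) * (x z.2 : ℝ)))).symm
      _ = ∑ w : ((Fin (t' + 1) × Fin (t' + 1)) × (Fin l × Fin l)),
            Z₂ w.1.1 w.1.2 * (Z₁ w.2.1 w.2.2 * ((x (w.2.1, w.1.1) : ℝ))
              * ((x (w.2.2, w.1.2) : ℝ))) := by
          refine Fintype.sum_equiv
            ⟨fun z => ((z.1.2, z.2.2), (z.1.1, z.2.1)),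
             fun w => ((w.2.1, w.1.1), (w.2.2, w.1.2)), fun z => rfl, fun w => rfl⟩
            _ _ fun z => ?_
          simp only [Equiv.coe_fn_mk, Matrix.kroneckerMap_apply]
          ring
      _ = ∑ s : Fin (t' + 1), ∑ s' : Fin (t' + 1), Z₂ s s' *
            ∑ i : Fin l, ∑ j : Fin l, Z₁ i j * ((x (i, s) : ℝ)) * ((x (j, s') : ℝ)) := by
          simp only [Fintype.sum_prod_type, Finset.mul_sum]
      _ = ∑ s : Fin (t' + 1), ∑ s' : Fin (t' + 1), z2 s.val s'.val * G s.val s'.val := by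
          refine Finset.sum_congr rfl fun s _ => Finset.sum_congr rfl fun s' _ => ?_
          rw [hZval s s', hG]
          congr 1
          show _ = Bform Z₁ (colr x s.val) (colr x s'.val)
          rw [← hcol s, ← hcol s']
          rfl
      _ = ∑ m ∈ Finset.range (t' + 1), ∑ n ∈ Finset.range (t' + 1), z2 m n * G m n := by
          rw [← Fin.sum_univ_eq_sum_range (fun m => ∑ n ∈ Finset.range (t' + 1), z2 m n * G m n)]
          exact Finset.sum_congr rfl fun s _ =>
            Fin.sum_univ_eq_sum_range (fun n => z2 s.val n * G s.val n) (t' + 1)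
  rw [hA]
  -- Step B: the A_t decomposition identity
  have hGsymm : ∀ m n, G m n = G n m := fun m n => Bform_symm h1sym _ _
  have hkey : (∑ m ∈ Finset.range (t' + 1), ∑ n ∈ Finset.range (t' + 1), z2 m n * G m n)
      = (1 / 2) * G 0 0
        + (1 / 2) * ∑ m ∈ Finset.range t',
            Bform Z₁ (colr x m - colr x (m + 1)) (colr x m - colr x (m + 1))
        + (1 / 2) * G t' t' := by
    have hz : ∀ m n, z2 m n * G m n = (if m = n then G m n else 0)
        - (1 / 2) * (if n = m + 1 then G m n else 0)
        - (1 / 2) * (if m = n + 1 then G m n else 0) := by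
      intro m n
      simp only [hz2]
      split_ifs <;> (first | (exfalso; omega) | ring)
    have P1 : (∑ m ∈ Finset.range (t' + 1), ∑ n ∈ Finset.range (t' + 1),
          if m = n then G m n else 0) = ∑ m ∈ Finset.range (t' + 1), G m m := by
      refine Finset.sum_congr rfl fun m hm => ?_
      rw [Finset.sum_ite_eq (Finset.range (t' + 1)) m (fun n => G m n), if_pos hm]
    have htrunc : ∀ f : ℕ → ℝ, (∑ m ∈ Finset.range (t' + 1),
          if m + 1 < t' + 1 then f m else 0) = ∑ m ∈ Finset.range t', f m := by
      intro f
      rw [← Finset.sum_subset (Finset.range_subset_range.mpr (Nat.le_succ t'))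
        (fun m hm hm' => by
          rw [if_neg]
          simp only [Finset.mem_range] at hm hm'
          omega)]
      refine Finset.sum_congr rfl fun m hm => ?_
      rw [if_pos]
      simp only [Finset.mem_range] at hm
      omega
    have P2 : (∑ m ∈ Finset.range (t' + 1), ∑ n ∈ Finset.range (t' + 1),
          if n = m + 1 then G m n else 0) = ∑ m ∈ Finset.range t', G m (m + 1) := by
      rw [← htrunc (fun m => G m (m + 1))]
      refine Finset.sum_congr rfl fun m _ => ?_
      rw [Finset.sum_ite_eq' (Finset.range (t' + 1)) (m + 1) (fun n => G m n)]
      simp [Finset.mem_range]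
    have P3 : (∑ m ∈ Finset.range (t' + 1), ∑ n ∈ Finset.range (t' + 1),
          if m = n + 1 then G m n else 0) = ∑ m ∈ Finset.range t', G m (m + 1) := by
      rw [Finset.sum_comm, ← htrunc (fun n => G n (n + 1))]
      refine Finset.sum_congr rfl fun n _ => ?_
      rw [Finset.sum_ite_eq' (Finset.range (t' + 1)) (n + 1) (fun m => G m n)]
      simp only [Finset.mem_range]
      rcases em (n + 1 < t' + 1) with h | h
      · rw [if_pos h, if_pos h, hGsymm]
      · rw [if_neg h, if_neg h]
    have hdiff : ∀ m : ℕ, Bform Z₁ (colr x m - colr x (m + 1)) (colr x m - colr x (m + 1))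
        = G m m - G m (m + 1) - G (m + 1) m + G (m + 1) (m + 1) :=
      fun m => Bform_sub_sub Z₁ _ _
    have E1 : (∑ m ∈ Finset.range (t' + 1), G m m)
        = ∑ m ∈ Finset.range t', G m m + G t' t' := Finset.sum_range_succ _ _
    have E2 : (∑ m ∈ Finset.range (t' + 1), G m m)
        = ∑ m ∈ Finset.range t', G (m + 1) (m + 1) + G 0 0 := Finset.sum_range_succ' _ _
    have hGmid : ∀ m ∈ Finset.range t', G (m + 1) m = G m (m + 1) :=
      fun m _ => hGsymm _ _
    calc (∑ m ∈ Finset.range (t' + 1), ∑ n ∈ Finset.range (t' + 1), z2 m n * G m n)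
        = (∑ m ∈ Finset.range (t' + 1), G m m)
          - (1 / 2) * ∑ m ∈ Finset.range t', G m (m + 1)
          - (1 / 2) * ∑ m ∈ Finset.range t', G m (m + 1) := by
          simp only [hz, Finset.sum_sub_distrib, ← Finset.mul_sum]
          rw [P1, P2, P3]
      _ = (1 / 2) * G 0 0
          + (1 / 2) * ∑ m ∈ Finset.range t',
              Bform Z₁ (colr x m - colr x (m + 1)) (colr x m - colr x (m + 1))
          + (1 / 2) * G t' t' := by
          simp only [hdiff, Finset.sum_add_distrib, Finset.sum_sub_distrib,
            Finset.sum_congr rfl hGmid]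
          linear_combination (1 / 2) * E1 + (1 / 2) * E2
  rw [hkey]
  -- Step C: lower bound `G 0 0 + middle + G t' t' ≥ 2`
  have hq1 : ∀ v : Fin l → ℤ, v ≠ 0 →
      1 ≤ Bform Z₁ (fun i => (v i : ℝ)) (fun i => (v i : ℝ)) :=
    fun v hv => Bform_one_le Z₁ h1sym h1pd h1diag h1off v hv
  have hq0 : ∀ v : Fin l → ℤ, 0 ≤ Bform Z₁ (fun i => (v i : ℝ)) (fun i => (v i : ℝ)) :=
    fun v => Bform_nonneg Z₁ h1sym h1pd h1diag h1off v
  have hGq : ∀ m, G m m = Bform Z₁ (fun i => ((colz x m i : ℤ) : ℝ))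
      (fun i => ((colz x m i : ℤ) : ℝ)) := fun m => rfl
  have hmid_eq : ∀ m : ℕ, Bform Z₁ (colr x m - colr x (m + 1)) (colr x m - colr x (m + 1))
      = Bform Z₁ (fun i => (((colz x m - colz x (m + 1)) i : ℤ) : ℝ))
          (fun i => (((colz x m - colz x (m + 1)) i : ℤ) : ℝ)) := by
    intro m
    have : colr x m - colr x (m + 1)
        = fun i => (((colz x m - colz x (m + 1)) i : ℤ) : ℝ) := by
      funext i
      simp [colr, Pi.sub_apply]
    rw [this]
  have hGd : ∀ m, 0 ≤ G m m := fun m => (hGq m) ▸ hq0 (colz x m)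
  have hG1 : ∀ m, colz x m ≠ 0 → 1 ≤ G m m := fun m hm => (hGq m) ▸ hq1 (colz x m) hm
  have hmid0 : ∀ m, 0 ≤ Bform Z₁ (colr x m - colr x (m + 1)) (colr x m - colr x (m + 1)) :=
    fun m => (hmid_eq m) ▸ hq0 _
  have hmid1 : ∀ m, colz x m - colz x (m + 1) ≠ 0 →
      1 ≤ Bform Z₁ (colr x m - colr x (m + 1)) (colr x m - colr x (m + 1)) :=
    fun m hm => (hmid_eq m) ▸ hq1 _ hm
  set Mid : ℝ := ∑ m ∈ Finset.range t',
      Bform Z₁ (colr x m - colr x (m + 1)) (colr x m - colr x (m + 1)) with hMid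
  have hMid0 : 0 ≤ Mid := Finset.sum_nonneg fun m _ => hmid0 m
  have h2le : 2 ≤ G 0 0 + Mid + G t' t' := by
    obtain ⟨p, hp⟩ := Function.ne_iff.mp hx
    have hsz : colz x p.2.val ≠ 0 := by
      intro h
      apply hp
      have := congrFun h p.1
      simpa [colz, p.2.isLt] using this
    have hslt : p.2.val ≤ t' := by omega
    by_cases hall : ∀ m < t', colz x m - colz x (m + 1) = 0
    · have h0s : colz x 0 = colz x p.2.val :=
        colz_const x 0 p.2.val (Nat.zero_le _) (fun m _ hm => hall m (by omega))
      have hst : colz x p.2.val = colz x t' :=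
        colz_const x p.2.val t' hslt (fun m _ hm => hall m hm)
      have hA1 : 1 ≤ G 0 0 := hG1 0 (by rw [h0s]; exact hsz)
      have hB1 : 1 ≤ G t' t' := hG1 t' (by rw [← hst]; exact hsz)
      linarith
    · push_neg at hall
      obtain ⟨m0, hm0, hd0⟩ := hall
      by_cases hall2 : ∀ m < t', m ≠ m0 → colz x m - colz x (m + 1) = 0
      · have hc0 : colz x 0 = colz x m0 :=
          colz_const x 0 m0 (Nat.zero_le _) (fun m hm hm' => hall2 m (by omega) (by omega))
        have hct : colz x (m0 + 1) = colz x t' :=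
          colz_const x (m0 + 1) t' (by omega) (fun m hm hm' => hall2 m (by omega) (by omega))
        have hmid : (1 : ℝ) ≤ Mid :=
          le_trans (hmid1 m0 hd0)
            (Finset.single_le_sum (fun m _ => hmid0 m) (Finset.mem_range.mpr hm0))
        have hend : colz x 0 ≠ 0 ∨ colz x t' ≠ 0 := by
          by_contra h
          push_neg at h
          apply hd0
          rw [show colz x m0 = 0 from hc0 ▸ h.1, show colz x (m0 + 1) = 0 from hct ▸ h.2]
          simp
        rcases hend with h | h
        · have := hG1 0 h
          have := hGd t'
          linarith
        · have := hG1 t' h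
          have := hGd 0
          linarith
      · push_neg at hall2
        obtain ⟨m1, hm1, hne, hd1⟩ := hall2
        have hsub : ({m0, m1} : Finset ℕ) ⊆ Finset.range t' := by
          intro a ha
          simp only [Finset.mem_insert, Finset.mem_singleton] at ha
          rcases ha with rfl | rfl <;> simp [Finset.mem_range, hm0, hm1]
        have hMid2 : (2 : ℝ) ≤ Mid := by
          have hpair : (∑ m ∈ ({m0, m1} : Finset ℕ),
                Bform Z₁ (colr x m - colr x (m + 1)) (colr x m - colr x (m + 1)))
              = Bform Z₁ (colr x m0 - colr x (m0 + 1)) (colr x m0 - colr x (m0 + 1))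
                + Bform Z₁ (colr x m1 - colr x (m1 + 1)) (colr x m1 - colr x (m1 + 1)) :=
            Finset.sum_pair (Ne.symm hne)
          have hle : (∑ m ∈ ({m0, m1} : Finset ℕ),
                Bform Z₁ (colr x m - colr x (m + 1)) (colr x m - colr x (m + 1))) ≤ Mid :=
            Finset.sum_le_sum_of_subset_of_nonneg hsub (fun m _ _ => hmid0 m)
          have h1 := hmid1 m0 hd0
          have h2 := hmid1 m1 hd1
          rw [hpair] at hle
          linarith
        have := hGd 0
        have := hGd t'
        linarith
  linarith

theorem kronecker_row_count_bound (l t k : ℕ)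
    (C : Matrix (Fin l) (Fin l) ℤ) (T : Matrix (Fin t) (Fin t) ℤ)
    (hCsym : C.IsSymm) (hTsym : T.IsSymm)
    (hCpsd : (C.map (fun z => (z : ℝ))).PosSemidef)
    (hTpsd : (T.map (fun z => (z : ℝ))).PosSemidef)
    (Q : Matrix (Fin k) (Fin l × Fin t) ℤ) (hQrows : ∀ i, Q i ≠ 0)
    (hQM : Qᵀ * Q = C ⊗ₖ T)
    (Z₁ : Matrix (Fin l) (Fin l) ℝ) (h1sym : Z₁.IsSymm) (h1pd : Z₁.PosDef)
    (h1diag : ∀ i, ∃ z : ℤ, Z₁ i i = z)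
    (h1off : ∀ i j, ∃ z : ℤ, 2 * Z₁ i j = z)
    (Z₂ : Matrix (Fin t) (Fin t) ℝ)
    (hZ₂ : Z₂ = Matrix.of fun (i j : Fin t) => if i = j then 1 else
      if (i : ℕ) + 1 = (j : ℕ) ∨ (j : ℕ) + 1 = (i : ℕ) then -(1 / 2) else 0) :
    (k : ℝ) ≤ ∑ r : Fin l × Fin t, ∑ s : Fin l × Fin t,
      (Z₁ ⊗ₖ Z₂) r s * (((Qᵀ * Q) r s : ℤ) : ℝ) := by
  calc (k : ℝ) = ∑ _i : Fin k, (1 : ℝ) := by simp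
    _ ≤ ∑ i : Fin k, ∑ r : Fin l × Fin t, ∑ s : Fin l × Fin t,
        (Z₁ ⊗ₖ Z₂) r s * ((Q i r : ℝ) * (Q i s : ℝ)) :=
      Finset.sum_le_sum fun i _ =>
        row_bound Z₁ h1sym h1pd h1diag h1off Z₂ hZ₂ (Q i) (hQrows i)
    _ = ∑ r : Fin l × Fin t, ∑ s : Fin l × Fin t,
        (Z₁ ⊗ₖ Z₂) r s * (((Qᵀ * Q) r s : ℤ) : ℝ) := by
      simp only [Matrix.mul_apply, Matrix.transpose_apply, Int.cast_sum, Finset.mul_sum,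
        Int.cast_mul]
      rw [Finset.sum_comm]
      refine Finset.sum_congr rfl fun r _ => ?_
      rw [Finset.sum_comm]
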